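/- Let a < b be real numbers, p, q ∈ ℕ, R0 ∈ L∞([a,b]; ℝ^{p×q}), and let R1, R2 : [a,b]² → ℝ^{p×q} be separable functions. Then there exists a continuous (bounded) linear operator P : L2([a,b];ℝ^q) → L2([a,b];ℝ^p) such that for every v ∈ L2([a,b];ℝ^q), (P v)(s) = R0(s) v(s) + ∫_a^s R1(s,θ) v(θ) dθ + ∫_s^b R2(s,θ) v(θ) dθ for almost every s ∈ [a,b]. (That is, every 3-PI operator with essentially bounded multiplier and separable kernels defines a bounded linear map from L2^q to L2^p.) -/

import Mathlib

open MeasureTheory Matrix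
open scoped ENNReal NNReal

noncomputable section

/-- The Lebesgue measure restricted to the interval `[a,b]`. -/
def μab (a b : ℝ) : Measure ℝ := volume.restrict (Set.Icc a b)

/-- A matrix-valued function on `[a,b]` is essentially bounded (i.e. belongs to
`L∞([a,b]; ℝ^{ι×κ})`): it is measurable and entrywise a.e. bounded. -/
def EssBddMat {ι κ : Type*} (a b : ℝ) (M : ℝ → Matrix ι κ ℝ) : Prop :=
  Measurable (fun s i j => M s i j) ∧ ∃ C : ℝ, ∀ᵐ s ∂(μab a b), ∀ i j, |M s i j| ≤ C

/-- A matrix-valued kernel `R : [a,b]² → ℝ^{ι×κ}` is separable if `R(s,θ) = F(s)ᵀ G(θ)`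
for some `r ∈ ℕ` and essentially bounded `F : [a,b] → ℝ^{r×ι}`, `G : [a,b] → ℝ^{r×κ}`. -/
def SepMat {ι κ : Type*} (a b : ℝ) (R : ℝ → ℝ → Matrix ι κ ℝ) : Prop :=
  ∃ (r : ℕ) (F : ℝ → Matrix (Fin r) ι ℝ) (G : ℝ → Matrix (Fin r) κ ℝ),
    EssBddMat a b F ∧ EssBddMat a b G ∧
    ∀ s ∈ Set.Icc a b, ∀ θ ∈ Set.Icc a b, R s θ = (F s)ᵀ * G θ

namespace ThreePIAux

lemma abs_coord_le_norm {n : ℕ} (x : EuclideanSpace ℝ (Fin n)) (j : Fin n) : |x j| ≤ ‖x‖ := by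
  rw [EuclideanSpace.norm_eq]
  rw [show |x j| = Real.sqrt (‖x j‖ ^ 2) by
    rw [Real.sqrt_sq_eq_abs, Real.norm_eq_abs, abs_abs]]
  exact Real.sqrt_le_sqrt (Finset.single_le_sum (f := fun i => ‖x i‖ ^ 2)
    (fun i _ => sq_nonneg _) (Finset.mem_univ j))

lemma norm_le_of_coords {n : ℕ} (x : EuclideanSpace ℝ (Fin n)) {c : ℝ} (hc : 0 ≤ c)
    (h : ∀ i, |x i| ≤ c) : ‖x‖ ≤ Real.sqrt n * c := by
  rw [EuclideanSpace.norm_eq]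
  have h1 : ∑ i, ‖x i‖ ^ 2 ≤ (n : ℝ) * c ^ 2 := by
    calc ∑ i, ‖x i‖ ^ 2 ≤ ∑ _i : Fin n, c ^ 2 := by
          refine Finset.sum_le_sum fun i _ => ?_
          rw [Real.norm_eq_abs]
          exact pow_le_pow_left₀ (abs_nonneg _) (h i) 2
      _ = (n : ℝ) * c ^ 2 := by
          rw [Finset.sum_const, Finset.card_univ, Fintype.card_fin, nsmul_eq_mul]
  calc Real.sqrt (∑ i, ‖x i‖ ^ 2) ≤ Real.sqrt ((n : ℝ) * c ^ 2) := Real.sqrt_le_sqrt h1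
    _ = Real.sqrt n * c := by
        rw [Real.sqrt_mul (Nat.cast_nonneg n), Real.sqrt_sq hc]

lemma mulVec_transpose_mul {r m n : ℕ} (F : Matrix (Fin r) (Fin m) ℝ)
    (G : Matrix (Fin r) (Fin n) ℝ) (x : Fin n → ℝ) (i : Fin m) :
    (Fᵀ * G).mulVec x i = ∑ k, F k i * G.mulVec x k := by
  simp only [Matrix.mulVec, Matrix.mul_apply, Matrix.transpose_apply, dotProduct,
    Finset.sum_mul, Finset.mul_sum]
  rw [Finset.sum_comm]
  refine Finset.sum_congr rfl fun k _ => Finset.sum_congr rfl fun j _ => by ring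

lemma abs_mulVec_le {m n : ℕ} {M : Matrix (Fin m) (Fin n) ℝ} {C : ℝ} (hC : 0 ≤ C)
    (h : ∀ i j, |M i j| ≤ C) (x : EuclideanSpace ℝ (Fin n)) (i : Fin m) :
    |M.mulVec x i| ≤ C * n * ‖x‖ := by
  have h0 : M.mulVec x i = ∑ j, M i j * x j := by
    simp [Matrix.mulVec, dotProduct]
  rw [h0]
  calc |∑ j, M i j * x j| ≤ ∑ j, |M i j * x j| := Finset.abs_sum_le_sum_abs _ _
    _ ≤ ∑ _j : Fin n, C * ‖x‖ := by
        refine Finset.sum_le_sum fun j _ => ?_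
        rw [abs_mul]
        exact mul_le_mul (h i j) (abs_coord_le_norm x j) (abs_nonneg _) hC
    _ = C * n * ‖x‖ := by
        rw [Finset.sum_const, Finset.card_univ, Fintype.card_fin, nsmul_eq_mul]; ring

lemma trunc {ι κ : Type*} {a b : ℝ} {M : ℝ → Matrix ι κ ℝ} (h : EssBddMat a b M) :
    ∃ (M' : ℝ → Matrix ι κ ℝ) (C : ℝ), 0 ≤ C ∧ (∀ i j, Measurable fun s => M' s i j) ∧
      (∀ s i j, |M' s i j| ≤ C) ∧ ∀ᵐ s ∂(μab a b), M' s = M s := by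
  obtain ⟨hm, C0, hC0⟩ := h
  refine ⟨fun s => Matrix.of fun i j => max (-(max C0 0)) (min (max C0 0) (M s i j)), max C0 0,
    le_max_right _ _, fun i j => ?_, fun s i j => ?_, ?_⟩
  · have h1 : Measurable fun s => M s i j :=
      (measurable_pi_apply j).comp ((measurable_pi_apply i).comp hm)
    exact measurable_const.max (measurable_const.min h1)
  · rw [abs_le]
    have hnn : (0:ℝ) ≤ max C0 0 := le_max_right _ _
    exact ⟨le_max_left _ _, max_le (le_trans (neg_nonpos.2 hnn) hnn) (min_le_left _ _)⟩
  · filter_upwards [hC0] with s hs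
    ext i j
    have h1 := (hs i j).trans (le_max_left C0 0)
    rw [abs_le] at h1
    simp only [Matrix.of_apply]
    rw [min_eq_right h1.2, max_eq_right h1.1]


lemma coord_aesm {α : Type*} [MeasurableSpace α] {μ : Measure α} {n : ℕ}
    {f : α → EuclideanSpace ℝ (Fin n)} (h : AEStronglyMeasurable f μ) (j : Fin n) :
    AEStronglyMeasurable (fun s => f s j) μ := by
  have hc : Continuous fun x : EuclideanSpace ℝ (Fin n) => x j :=
    (continuous_apply j).comp (PiLp.continuousLinearEquiv 2 ℝ (fun _ : Fin n => ℝ)).continuous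
  exact hc.comp_aestronglyMeasurable h

lemma aesm_pi {α : Type*} [MeasurableSpace α] {μ : Measure α} {n : ℕ}
    {f : α → EuclideanSpace ℝ (Fin n)}
    (h : ∀ i, AEMeasurable (fun s => f s i) μ) : AEStronglyMeasurable f μ := by
  classical
  let g : α → EuclideanSpace ℝ (Fin n) := fun s => WithLp.toLp 2 (fun i => (h i).mk _ s)
  have hg : Measurable g := (MeasurableEquiv.toLp 2 (Fin n → ℝ)).measurable.comp
    (measurable_pi_lambda _ fun i => (h i).measurable_mk)
  refine ⟨g, hg.stronglyMeasurable, ?_⟩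
  have hae : ∀ᵐ s ∂μ, ∀ i, f s i = (h i).mk _ s :=
    ae_all_iff.2 fun i => (h i).ae_eq_mk
  filter_upwards [hae] with s hs
  ext i
  exact hs i

/-- The candidate function for the image of `u` under the 3-PI operator with
truncated data. -/
def Hfun {p q r1 r2 : ℕ} (a b : ℝ) (R0' : ℝ → Matrix (Fin p) (Fin q) ℝ)
    (F1' : ℝ → Matrix (Fin r1) (Fin p) ℝ) (G1' : ℝ → Matrix (Fin r1) (Fin q) ℝ)
    (F2' : ℝ → Matrix (Fin r2) (Fin p) ℝ) (G2' : ℝ → Matrix (Fin r2) (Fin q) ℝ)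
    (u : ℝ → EuclideanSpace ℝ (Fin q)) : ℝ → EuclideanSpace ℝ (Fin p) := fun s => WithLp.toLp 2 fun i =>
  (R0' s).mulVec (u s) i + (∑ k, F1' s k i * ∫ θ in a..s, (G1' θ).mulVec (u θ) k)
    + ∑ k, F2' s k i * ∫ θ in s..b, (G2' θ).mulVec (u θ) k

end ThreePIAux

/-- Every 3-PI operator, with essentially bounded multiplier `R0` and
separable kernels `R1, R2`, defines a bounded linear map from `L2([a,b];ℝ^q)` to
`L2([a,b];ℝ^p)`: there is a continuous linear operator `P` such that for every
`v ∈ L2([a,b];ℝ^q)` and almost every `s ∈ [a,b]`,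
`(P v)(s) = R0(s) v(s) + ∫_a^s R1(s,θ) v(θ) dθ + ∫_s^b R2(s,θ) v(θ) dθ`. -/
theorem three_PI_operator_bounded (a b : ℝ) (hab : a < b) (p q : ℕ)
    (R0 : ℝ → Matrix (Fin p) (Fin q) ℝ) (R1 R2 : ℝ → ℝ → Matrix (Fin p) (Fin q) ℝ)
    (hR0 : EssBddMat a b R0) (hR1 : SepMat a b R1) (hR2 : SepMat a b R2) :
    ∃ P : Lp (EuclideanSpace ℝ (Fin q)) 2 (μab a b) →L[ℝ]
          Lp (EuclideanSpace ℝ (Fin p)) 2 (μab a b),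
      ∀ v : Lp (EuclideanSpace ℝ (Fin q)) 2 (μab a b),
        ∀ᵐ s ∂(μab a b), ∀ i : Fin p,
          (P v : ℝ → EuclideanSpace ℝ (Fin p)) s i =
            (R0 s).mulVec (fun j => (v : ℝ → EuclideanSpace ℝ (Fin q)) s j) i
            + (∫ θ in a..s, (R1 s θ).mulVec
                (fun j => (v : ℝ → EuclideanSpace ℝ (Fin q)) θ j) i)
            + (∫ θ in s..b, (R2 s θ).mulVec
                (fun j => (v : ℝ → EuclideanSpace ℝ (Fin q)) θ j) i) := by
  classical
  obtain ⟨R0', C0, hC0, hR0m, hR0b, hR0ae⟩ := ThreePIAux.trunc hR0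
  obtain ⟨r1, F1, G1, hF1e, hG1e, hR1eq⟩ := hR1
  obtain ⟨F1', CF1, hCF1, hF1m, hF1b, hF1ae⟩ := ThreePIAux.trunc hF1e
  obtain ⟨G1', CG1, hCG1, hG1m, hG1b, hG1ae⟩ := ThreePIAux.trunc hG1e
  obtain ⟨r2, F2, G2, hF2e, hG2e, hR2eq⟩ := hR2
  obtain ⟨F2', CF2, hCF2, hF2m, hF2b, hF2ae⟩ := ThreePIAux.trunc hF2e
  obtain ⟨G2', CG2, hCG2, hG2m, hG2b, hG2ae⟩ := ThreePIAux.trunc hG2e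
  have hIcc : MeasurableSet (Set.Icc a b) := measurableSet_Icc
  haveI hfin : IsFiniteMeasure (μab a b) := by
    constructor
    rw [μab, Measure.restrict_apply_univ]
    exact measure_Icc_lt_top
  have hμne : μab a b ≠ 0 := by
    have hμuniv : μab a b Set.univ = ENNReal.ofReal (b - a) := by
      rw [μab, Measure.restrict_apply_univ, Real.volume_Icc]
    intro h0
    rw [h0] at hμuniv
    simp only [Measure.coe_zero, Pi.zero_apply] at hμuniv
    have := ENNReal.ofReal_pos.2 (show (0:ℝ) < b - a by linarith)
    rw [← hμuniv] at this
    exact lt_irrefl _ this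
  -- the canonical globally-defined representative of `v`
  set U : Lp (EuclideanSpace ℝ (Fin q)) 2 (μab a b) → ℝ → EuclideanSpace ℝ (Fin q) :=
    fun v => (Set.Icc a b).indicator (v : ℝ → EuclideanSpace ℝ (Fin q)) with hUdef
  have hUmem : ∀ v, ∀ s ∈ Set.Icc a b,
      U v s = (v : ℝ → EuclideanSpace ℝ (Fin q)) s := by
    intro v s hs
    simp only [hUdef]
    exact Set.indicator_of_mem hs _
  have hUae : ∀ v, U v =ᵐ[μab a b] (v : ℝ → EuclideanSpace ℝ (Fin q)) := by
    intro v
    filter_upwards [ae_restrict_mem hIcc] with s hs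
    exact hUmem v s hs
  have hUsm : ∀ v, AEStronglyMeasurable (U v) volume := fun v =>
    (aestronglyMeasurable_indicator_iff hIcc).2 (Lp.aestronglyMeasurable v)
  have hUint : ∀ v, Integrable (U v) volume := by
    intro v
    simp only [hUdef]
    exact (integrable_indicator_iff hIcc).2 ((Lp.memLp v).integrable (by norm_num))
  have hnormint : ∀ v, Integrable (fun θ => ‖U v θ‖) volume := fun v => (hUint v).norm
  have hUj : ∀ v (j : Fin q), Integrable (fun θ => U v θ j) volume := by
    intro v j
    have hsm : AEStronglyMeasurable (fun θ => U v θ j) volume :=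
      ThreePIAux.coord_aesm (hUsm v) j
    refine Integrable.mono (hUint v).norm hsm (ae_of_all _ fun θ => ?_)
    rw [Real.norm_eq_abs, norm_norm]
    exact ThreePIAux.abs_coord_le_norm (U v θ) j
  -- integrability of the kernel integrands
  have keyint : ∀ (r : ℕ) (G' : ℝ → Matrix (Fin r) (Fin q) ℝ) (CG : ℝ),
      (∀ i j, Measurable fun s => G' s i j) → (∀ s i j, |G' s i j| ≤ CG) →
      ∀ v (k : Fin r), Integrable (fun θ => (G' θ).mulVec (U v θ) k) volume := by
    intro r G' CG hGm hGb v k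
    have h0 : (fun θ => (G' θ).mulVec (U v θ) k) = fun θ => ∑ j, G' θ k j * U v θ j := by
      funext θ; simp [Matrix.mulVec, dotProduct]
    rw [h0]
    refine integrable_finset_sum _ fun j _ => Integrable.bdd_mul (hUj v j)
      ((hGm k j).aestronglyMeasurable) (c := CG) (ae_of_all _ fun θ => ?_)
    rw [Real.norm_eq_abs]
    exact hGb θ k j
  have hg1int := keyint r1 G1' CG1 hG1m hG1b
  have hg2int := keyint r2 G2' CG2 hG2m hG2b
  set Nv : Lp (EuclideanSpace ℝ (Fin q)) 2 (μab a b) → ℝ :=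
    fun v => ∫ θ, ‖U v θ‖ with hNvdef
  have hNv0 : ∀ v, 0 ≤ Nv v := fun v => integral_nonneg fun θ => norm_nonneg _
  -- uniform bound on the partial integrals
  have keybd : ∀ (r : ℕ) (G' : ℝ → Matrix (Fin r) (Fin q) ℝ) (CG : ℝ), 0 ≤ CG →
      (∀ s i j, |G' s i j| ≤ CG) →
      (∀ v (k : Fin r), Integrable (fun θ => (G' θ).mulVec (U v θ) k) volume) →
      ∀ v (k : Fin r) (s t : ℝ),
        |∫ θ in s..t, (G' θ).mulVec (U v θ) k| ≤ CG * q * Nv v := by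
    intro r G' CG hCG hGb hint v k s t
    have h1 : |∫ θ in s..t, (G' θ).mulVec (U v θ) k|
        ≤ ∫ θ in Set.uIoc s t, ‖(G' θ).mulVec (U v θ) k‖ := by
      rw [← Real.norm_eq_abs]
      exact intervalIntegral.norm_integral_le_integral_norm_uIoc
    refine h1.trans ?_
    have h2 : ∫ θ in Set.uIoc s t, ‖(G' θ).mulVec (U v θ) k‖
        ≤ ∫ θ, ‖(G' θ).mulVec (U v θ) k‖ :=
      setIntegral_le_integral (hint v k).norm (ae_of_all _ fun θ => norm_nonneg _)
    refine h2.trans ?_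
    have h3 : ∫ θ, ‖(G' θ).mulVec (U v θ) k‖ ≤ ∫ θ, CG * q * ‖U v θ‖ := by
      refine integral_mono (hint v k).norm ((hnormint v).const_mul _) fun θ => ?_
      rw [Real.norm_eq_abs]
      exact ThreePIAux.abs_mulVec_le hCG (hGb θ) (U v θ) k
    refine h3.trans (le_of_eq ?_)
    rw [integral_const_mul]
  have hbd1 := keybd r1 G1' CG1 hCG1 hG1b hg1int
  have hbd2 := keybd r2 G2' CG2 hCG2 hG2b hg2int
  -- the candidate image function
  set H : Lp (EuclideanSpace ℝ (Fin q)) 2 (μab a b) → ℝ → EuclideanSpace ℝ (Fin p) :=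
    fun v => ThreePIAux.Hfun a b R0' F1' G1' F2' G2' (U v) with hHdef
  -- measurability of H v
  have hHsm : ∀ v, AEStronglyMeasurable (H v) (μab a b) := by
    intro v
    have hcomp : ∀ i : Fin p, AEMeasurable (fun s => H v s i) (μab a b) := by
      intro i
      have h0 : AEMeasurable (fun s => (R0' s).mulVec (U v s) i) (μab a b) := by
        have he : (fun s => (R0' s).mulVec (U v s) i)
            = fun s => ∑ j, R0' s i j * U v s j := by
          funext s; simp [Matrix.mulVec, dotProduct]
        rw [he]
        refine Finset.aemeasurable_fun_sum _ fun j _ => AEMeasurable.mul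
          ((hR0m i j).aemeasurable) ?_
        exact (ThreePIAux.coord_aesm (hUsm v) j).aemeasurable.restrict
      have h1 : AEMeasurable
          (fun s => ∑ k, F1' s k i * ∫ θ in a..s, (G1' θ).mulVec (U v θ) k)
          (μab a b) := by
        refine Finset.aemeasurable_fun_sum _ fun k _ => AEMeasurable.mul
          ((hF1m k i).aemeasurable) ?_
        exact ((hg1int v k).continuous_primitive a).aemeasurable
      have h2 : AEMeasurable
          (fun s => ∑ k, F2' s k i * ∫ θ in s..b, (G2' θ).mulVec (U v θ) k)
          (μab a b) := by
        refine Finset.aemeasurable_fun_sum _ fun k _ => AEMeasurable.mul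
          ((hF2m k i).aemeasurable) ?_
        have hc : Continuous fun s => ∫ θ in s..b, (G2' θ).mulVec (U v θ) k := by
          have he : (fun s => ∫ θ in s..b, (G2' θ).mulVec (U v θ) k)
              = fun s => -(∫ θ in b..s, (G2' θ).mulVec (U v θ) k) := by
            funext s; rw [intervalIntegral.integral_symm]
          rw [he]
          exact ((hg2int v k).continuous_primitive b).neg
        exact hc.aemeasurable
      have : (fun s => H v s i)
          = fun s => (R0' s).mulVec (U v s) i
            + (∑ k, F1' s k i * ∫ θ in a..s, (G1' θ).mulVec (U v θ) k)
            + ∑ k, F2' s k i * ∫ θ in s..b, (G2' θ).mulVec (U v θ) k := by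
        funext s
        simp only [hHdef, ThreePIAux.Hfun, WithLp.ofLp_toLp]
      rw [this]
      exact (h0.add h1).add h2
    exact ThreePIAux.aesm_pi hcomp
  -- pointwise bound
  set A : ℝ := Real.sqrt p * (C0 * q) with hAdef
  set B : ℝ := Real.sqrt p * (r1 * (CF1 * (CG1 * q)) + r2 * (CF2 * (CG2 * q))) with hBdef
  have hq0 : (0:ℝ) ≤ (q:ℝ) := Nat.cast_nonneg q
  have hA : 0 ≤ A := mul_nonneg (Real.sqrt_nonneg _) (mul_nonneg hC0 hq0)
  have hB : 0 ≤ B := by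
    refine mul_nonneg (Real.sqrt_nonneg _) (add_nonneg ?_ ?_)
    · exact mul_nonneg (Nat.cast_nonneg r1) (mul_nonneg hCF1 (mul_nonneg hCG1 hq0))
    · exact mul_nonneg (Nat.cast_nonneg r2) (mul_nonneg hCF2 (mul_nonneg hCG2 hq0))
  have hptbd : ∀ v s, ‖H v s‖ ≤ A * ‖U v s‖ + B * Nv v := by
    intro v s
    have hc : (0:ℝ) ≤ C0 * q * ‖U v s‖
        + (r1 * (CF1 * (CG1 * q * Nv v)) + r2 * (CF2 * (CG2 * q * Nv v))) := by
      have k1 : (0:ℝ) ≤ C0 * q * ‖U v s‖ :=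
        mul_nonneg (mul_nonneg hC0 hq0) (norm_nonneg _)
      have k2 : (0:ℝ) ≤ r1 * (CF1 * (CG1 * q * Nv v)) :=
        mul_nonneg (Nat.cast_nonneg r1)
          (mul_nonneg hCF1 (mul_nonneg (mul_nonneg hCG1 hq0) (hNv0 v)))
      have k3 : (0:ℝ) ≤ r2 * (CF2 * (CG2 * q * Nv v)) :=
        mul_nonneg (Nat.cast_nonneg r2)
          (mul_nonneg hCF2 (mul_nonneg (mul_nonneg hCG2 hq0) (hNv0 v)))
      linarith
    have hcoord : ∀ i : Fin p, |H v s i| ≤ C0 * q * ‖U v s‖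
        + (r1 * (CF1 * (CG1 * q * Nv v)) + r2 * (CF2 * (CG2 * q * Nv v))) := by
      intro i
      have he : H v s i = (R0' s).mulVec (U v s) i
          + (∑ k, F1' s k i * ∫ θ in a..s, (G1' θ).mulVec (U v θ) k)
          + ∑ k, F2' s k i * ∫ θ in s..b, (G2' θ).mulVec (U v θ) k := by
        simp only [hHdef, ThreePIAux.Hfun, WithLp.ofLp_toLp]
      rw [he]
      have t0 : |(R0' s).mulVec (U v s) i| ≤ C0 * q * ‖U v s‖ :=
        ThreePIAux.abs_mulVec_le hC0 (hR0b s) (U v s) i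
      have t1 : |∑ k, F1' s k i * ∫ θ in a..s, (G1' θ).mulVec (U v θ) k|
          ≤ r1 * (CF1 * (CG1 * q * Nv v)) := by
        calc |∑ k, F1' s k i * ∫ θ in a..s, (G1' θ).mulVec (U v θ) k|
            ≤ ∑ k, |F1' s k i * ∫ θ in a..s, (G1' θ).mulVec (U v θ) k| :=
              Finset.abs_sum_le_sum_abs _ _
          _ ≤ ∑ _k : Fin r1, CF1 * (CG1 * q * Nv v) := by
              refine Finset.sum_le_sum fun k _ => ?_
              rw [abs_mul]
              exact mul_le_mul (hF1b s k i) (hbd1 v k a s) (abs_nonneg _) hCF1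
          _ = r1 * (CF1 * (CG1 * q * Nv v)) := by
              rw [Finset.sum_const, Finset.card_univ, Fintype.card_fin, nsmul_eq_mul]
      have t2 : |∑ k, F2' s k i * ∫ θ in s..b, (G2' θ).mulVec (U v θ) k|
          ≤ r2 * (CF2 * (CG2 * q * Nv v)) := by
        calc |∑ k, F2' s k i * ∫ θ in s..b, (G2' θ).mulVec (U v θ) k|
            ≤ ∑ k, |F2' s k i * ∫ θ in s..b, (G2' θ).mulVec (U v θ) k| :=
              Finset.abs_sum_le_sum_abs _ _
          _ ≤ ∑ _k : Fin r2, CF2 * (CG2 * q * Nv v) := by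
              refine Finset.sum_le_sum fun k _ => ?_
              rw [abs_mul]
              exact mul_le_mul (hF2b s k i) (hbd2 v k s b) (abs_nonneg _) hCF2
          _ = r2 * (CF2 * (CG2 * q * Nv v)) := by
              rw [Finset.sum_const, Finset.card_univ, Fintype.card_fin, nsmul_eq_mul]
      calc |(R0' s).mulVec (U v s) i
            + (∑ k, F1' s k i * ∫ θ in a..s, (G1' θ).mulVec (U v θ) k)
            + ∑ k, F2' s k i * ∫ θ in s..b, (G2' θ).mulVec (U v θ) k|
          ≤ |(R0' s).mulVec (U v s) i|
            + |∑ k, F1' s k i * ∫ θ in a..s, (G1' θ).mulVec (U v θ) k|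
            + |∑ k, F2' s k i * ∫ θ in s..b, (G2' θ).mulVec (U v θ) k| :=
            abs_add_three _ _ _
        _ ≤ C0 * q * ‖U v s‖
            + (r1 * (CF1 * (CG1 * q * Nv v)) + r2 * (CF2 * (CG2 * q * Nv v))) := by
            linarith
    have := ThreePIAux.norm_le_of_coords (H v s) hc hcoord
    refine this.trans (le_of_eq ?_)
    rw [hAdef, hBdef]; ring
  -- the L² bound
  set c : ℝ≥0∞ := μab a b Set.univ ^ (1/2 : ℝ) with hcdef
  have hc_ne : c ≠ ⊤ := by
    rw [hcdef]
    exact (ENNReal.rpow_lt_top_of_nonneg (by norm_num) (measure_ne_top _ _)).ne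
  set K : ℝ≥0∞ := ENNReal.ofReal A + ENNReal.ofReal B * c * c with hKdef
  have hK_ne : K ≠ ⊤ := by
    rw [hKdef]
    exact ENNReal.add_ne_top.2 ⟨ENNReal.ofReal_ne_top,
      ENNReal.mul_ne_top (ENNReal.mul_ne_top ENNReal.ofReal_ne_top hc_ne) hc_ne⟩
  have hsnorm : ∀ v, eLpNorm (H v) 2 (μab a b)
      ≤ K * eLpNorm (v : ℝ → EuclideanSpace ℝ (Fin q)) 2 (μab a b) := by
    intro v
    set E : ℝ≥0∞ := eLpNorm (v : ℝ → EuclideanSpace ℝ (Fin q)) 2 (μab a b) with hEdef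
    have m1 : eLpNorm (H v) 2 (μab a b)
        ≤ eLpNorm (fun s => A * ‖U v s‖ + B * Nv v) 2 (μab a b) := by
      refine eLpNorm_mono_ae (ae_of_all _ fun s => ?_)
      rw [Real.norm_eq_abs]
      exact (hptbd v s).trans (le_abs_self _)
    have hsm1 : AEStronglyMeasurable (fun s => A * ‖U v s‖) (μab a b) :=
      aestronglyMeasurable_const.mul ((hUsm v).norm.restrict)
    have m2 : eLpNorm (fun s => A * ‖U v s‖ + B * Nv v) 2 (μab a b)
        ≤ eLpNorm (fun s => A * ‖U v s‖) 2 (μab a b)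
          + eLpNorm (fun _ : ℝ => B * Nv v) 2 (μab a b) :=
      eLpNorm_add_le hsm1 aestronglyMeasurable_const (by norm_num)
    have m3 : eLpNorm (fun s => A * ‖U v s‖) 2 (μab a b) = ENNReal.ofReal A * E := by
      have h1 : eLpNorm (fun s : ℝ => A * ‖U v s‖) 2 (μab a b)
          = ‖A‖ₑ * eLpNorm (fun s => ‖U v s‖) 2 (μab a b) :=
        eLpNorm_const_smul (𝕜 := ℝ) A (fun s => ‖U v s‖) 2 (μab a b)
      rw [h1, eLpNorm_norm, eLpNorm_congr_ae (hUae v), ← hEdef, Real.enorm_eq_ofReal hA]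
    have m5 : eLpNorm (fun _ : ℝ => B * Nv v) 2 (μab a b)
        = ENNReal.ofReal B * ENNReal.ofReal (Nv v) * c := by
      rw [eLpNorm_const _ (by norm_num) hμne]
      rw [show (1 / (2:ℝ≥0∞).toReal) = (1/2 : ℝ) by norm_num]
      rw [Real.enorm_eq_ofReal (mul_nonneg hB (hNv0 v)), ENNReal.ofReal_mul hB, hcdef]
    have m6 : ENNReal.ofReal (Nv v) ≤ E * c := by
      have e1 : ENNReal.ofReal (Nv v) = eLpNorm (U v) 1 volume := by
        rw [eLpNorm_one_eq_lintegral_enorm, hNvdef,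
          ← ofReal_integral_norm_eq_lintegral_enorm (hUint v)]
      have e2 : eLpNorm (U v) 1 volume
          = eLpNorm (v : ℝ → EuclideanSpace ℝ (Fin q)) 1 (μab a b) := by
        simp only [hUdef]
        exact eLpNorm_indicator_eq_eLpNorm_restrict hIcc
      have e3 : eLpNorm (v : ℝ → EuclideanSpace ℝ (Fin q)) 1 (μab a b)
          ≤ E * μab a b Set.univ ^ (1/(1:ℝ≥0∞).toReal - 1/(2:ℝ≥0∞).toReal) :=
        eLpNorm_le_eLpNorm_mul_rpow_measure_univ (by norm_num)
          (Lp.aestronglyMeasurable v)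
      rw [e1, e2]
      refine e3.trans (le_of_eq ?_)
      rw [hcdef]
      norm_num
    calc eLpNorm (H v) 2 (μab a b)
        ≤ eLpNorm (fun s => A * ‖U v s‖) 2 (μab a b)
          + eLpNorm (fun _ : ℝ => B * Nv v) 2 (μab a b) := m1.trans m2
      _ ≤ ENNReal.ofReal A * E + ENNReal.ofReal B * (E * c) * c := by
          rw [m3, m5]
          refine add_le_add le_rfl ?_
          gcongr
      _ = K * E := by rw [hKdef]; ring
  have hmem : ∀ v, MemLp (H v) 2 (μab a b) := by
    intro v
    refine ⟨hHsm v, lt_of_le_of_lt (hsnorm v) ?_⟩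
    exact ENNReal.mul_lt_top hK_ne.lt_top (Lp.memLp v).2
  -- additivity
  have hUadd : ∀ v w, U (v + w) =ᵐ[volume] U v + U w := by
    intro v w
    have h' := (ae_restrict_iff' hIcc).1 (Lp.coeFn_add v w)
    filter_upwards [h'] with θ hθ
    by_cases hm : θ ∈ Set.Icc a b
    · simp only [hUdef, Set.indicator_of_mem hm, Pi.add_apply]
      rw [hθ hm]
      simp
    · simp [hUdef, Set.indicator_of_notMem hm]
  have hUsmul : ∀ (r : ℝ) v, U (r • v) =ᵐ[volume] r • U v := by
    intro r v
    have h' := (ae_restrict_iff' hIcc).1 (Lp.coeFn_smul r v)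
    filter_upwards [h'] with θ hθ
    by_cases hm : θ ∈ Set.Icc a b
    · simp only [hUdef, Set.indicator_of_mem hm, Pi.smul_apply]
      rw [hθ hm]
      simp
    · simp [hUdef, Set.indicator_of_notMem hm]
  have hHadd : ∀ v w, H (v + w) =ᵐ[μab a b] H v + H w := by
    intro v w
    have hg1a : ∀ k : Fin r1, (fun θ => (G1' θ).mulVec (U (v + w) θ) k)
        =ᵐ[volume] fun θ => (G1' θ).mulVec (U v θ) k + (G1' θ).mulVec (U w θ) k := by
      intro k
      filter_upwards [hUadd v w] with θ hθ
      simp [Matrix.mulVec, dotProduct, hθ, Pi.add_apply, PiLp.add_apply, mul_add,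
        Finset.sum_add_distrib]
    have hg2a : ∀ k : Fin r2, (fun θ => (G2' θ).mulVec (U (v + w) θ) k)
        =ᵐ[volume] fun θ => (G2' θ).mulVec (U v θ) k + (G2' θ).mulVec (U w θ) k := by
      intro k
      filter_upwards [hUadd v w] with θ hθ
      simp [Matrix.mulVec, dotProduct, hθ, Pi.add_apply, PiLp.add_apply, mul_add,
        Finset.sum_add_distrib]
    have hI1a : ∀ (k : Fin r1) (s : ℝ),
        ∫ θ in a..s, (G1' θ).mulVec (U (v + w) θ) k
          = (∫ θ in a..s, (G1' θ).mulVec (U v θ) k)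
            + ∫ θ in a..s, (G1' θ).mulVec (U w θ) k := by
      intro k s
      rw [intervalIntegral.integral_congr_ae ((hg1a k).mono fun θ h _ => h)]
      exact intervalIntegral.integral_add ((hg1int v k).intervalIntegrable)
        ((hg1int w k).intervalIntegrable)
    have hI2a : ∀ (k : Fin r2) (s : ℝ),
        ∫ θ in s..b, (G2' θ).mulVec (U (v + w) θ) k
          = (∫ θ in s..b, (G2' θ).mulVec (U v θ) k)
            + ∫ θ in s..b, (G2' θ).mulVec (U w θ) k := by
      intro k s
      rw [intervalIntegral.integral_congr_ae ((hg2a k).mono fun θ h _ => h)]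
      exact intervalIntegral.integral_add ((hg2int v k).intervalIntegrable)
        ((hg2int w k).intervalIntegrable)
    filter_upwards [ae_restrict_of_ae (hUadd v w)] with s hUs
    ext i
    simp only [Pi.add_apply, PiLp.add_apply, hHdef, ThreePIAux.Hfun, WithLp.ofLp_toLp]
    have e0 : (R0' s).mulVec (U (v + w) s) i
        = (R0' s).mulVec (U v s) i + (R0' s).mulVec (U w s) i := by
      simp [Matrix.mulVec, dotProduct, hUs, Pi.add_apply, PiLp.add_apply, mul_add,
        Finset.sum_add_distrib]
    have e1 : ∑ k, F1' s k i * ∫ θ in a..s, (G1' θ).mulVec (U (v + w) θ) k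
        = (∑ k, F1' s k i * ∫ θ in a..s, (G1' θ).mulVec (U v θ) k)
          + ∑ k, F1' s k i * ∫ θ in a..s, (G1' θ).mulVec (U w θ) k := by
      rw [← Finset.sum_add_distrib]
      exact Finset.sum_congr rfl fun k _ => by rw [hI1a k s, mul_add]
    have e2 : ∑ k, F2' s k i * ∫ θ in s..b, (G2' θ).mulVec (U (v + w) θ) k
        = (∑ k, F2' s k i * ∫ θ in s..b, (G2' θ).mulVec (U v θ) k)
          + ∑ k, F2' s k i * ∫ θ in s..b, (G2' θ).mulVec (U w θ) k := by
      rw [← Finset.sum_add_distrib]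
      exact Finset.sum_congr rfl fun k _ => by rw [hI2a k s, mul_add]
    rw [e0, e1, e2]
    ring
  -- scalar multiplication
  have hHsmul : ∀ (r : ℝ) v, H (r • v) =ᵐ[μab a b] r • H v := by
    intro r v
    have hg1a : ∀ k : Fin r1, (fun θ => (G1' θ).mulVec (U (r • v) θ) k)
        =ᵐ[volume] fun θ => r * (G1' θ).mulVec (U v θ) k := by
      intro k
      filter_upwards [hUsmul r v] with θ hθ
      simp only [Matrix.mulVec, dotProduct, hθ, Pi.smul_apply, PiLp.smul_apply,
        smul_eq_mul, Finset.mul_sum]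
      exact Finset.sum_congr rfl fun j _ => by ring
    have hg2a : ∀ k : Fin r2, (fun θ => (G2' θ).mulVec (U (r • v) θ) k)
        =ᵐ[volume] fun θ => r * (G2' θ).mulVec (U v θ) k := by
      intro k
      filter_upwards [hUsmul r v] with θ hθ
      simp only [Matrix.mulVec, dotProduct, hθ, Pi.smul_apply, PiLp.smul_apply,
        smul_eq_mul, Finset.mul_sum]
      exact Finset.sum_congr rfl fun j _ => by ring
    have hI1a : ∀ (k : Fin r1) (s : ℝ),
        ∫ θ in a..s, (G1' θ).mulVec (U (r • v) θ) k
          = r * ∫ θ in a..s, (G1' θ).mulVec (U v θ) k := by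
      intro k s
      rw [intervalIntegral.integral_congr_ae ((hg1a k).mono fun θ h _ => h)]
      exact intervalIntegral.integral_const_mul _ _
    have hI2a : ∀ (k : Fin r2) (s : ℝ),
        ∫ θ in s..b, (G2' θ).mulVec (U (r • v) θ) k
          = r * ∫ θ in s..b, (G2' θ).mulVec (U v θ) k := by
      intro k s
      rw [intervalIntegral.integral_congr_ae ((hg2a k).mono fun θ h _ => h)]
      exact intervalIntegral.integral_const_mul _ _
    filter_upwards [ae_restrict_of_ae (hUsmul r v)] with s hUs
    ext i
    simp only [Pi.smul_apply, PiLp.smul_apply, smul_eq_mul, hHdef, ThreePIAux.Hfun,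
      WithLp.ofLp_toLp]
    have e0 : (R0' s).mulVec (U (r • v) s) i = r * (R0' s).mulVec (U v s) i := by
      simp [Matrix.mulVec, dotProduct, hUs, Pi.smul_apply, PiLp.smul_apply,
        smul_eq_mul, Finset.mul_sum]
      exact Finset.sum_congr rfl fun j _ => by ring
    have e1 : ∑ k, F1' s k i * ∫ θ in a..s, (G1' θ).mulVec (U (r • v) θ) k
        = r * ∑ k, F1' s k i * ∫ θ in a..s, (G1' θ).mulVec (U v θ) k := by
      rw [Finset.mul_sum]
      exact Finset.sum_congr rfl fun k _ => by rw [hI1a k s]; ring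
    have e2 : ∑ k, F2' s k i * ∫ θ in s..b, (G2' θ).mulVec (U (r • v) θ) k
        = r * ∑ k, F2' s k i * ∫ θ in s..b, (G2' θ).mulVec (U v θ) k := by
      rw [Finset.mul_sum]
      exact Finset.sum_congr rfl fun k _ => by rw [hI2a k s]; ring
    rw [e0, e1, e2]
    ring
  -- the bounded linear operator
  let T : Lp (EuclideanSpace ℝ (Fin q)) 2 (μab a b)
      →ₗ[ℝ] Lp (EuclideanSpace ℝ (Fin p)) 2 (μab a b) :=
    { toFun := fun v => (hmem v).toLp (H v)
      map_add' := by
        intro v w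
        rw [← MemLp.toLp_add (hmem v) (hmem w)]
        exact MemLp.toLp_congr _ _ (hHadd v w)
      map_smul' := by
        intro r v
        simp only [RingHom.id_apply]
        rw [← MemLp.toLp_const_smul r (hmem v)]
        exact MemLp.toLp_congr _ _ (hHsmul r v) }
  have hTbound : ∀ v, ‖T v‖ ≤ K.toReal * ‖v‖ := by
    intro v
    have h1 : ‖T v‖ = (eLpNorm (H v) 2 (μab a b)).toReal := by
      have he : T v = (hmem v).toLp (H v) := rfl
      rw [he, Lp.norm_toLp]
    rw [h1, Lp.norm_def]
    have h2 : (eLpNorm (H v) 2 (μab a b)).toReal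
        ≤ (K * eLpNorm (v : ℝ → EuclideanSpace ℝ (Fin q)) 2 (μab a b)).toReal :=
      ENNReal.toReal_mono (ENNReal.mul_ne_top hK_ne (Lp.memLp v).2.ne) (hsnorm v)
    rw [ENNReal.toReal_mul] at h2
    exact h2
  refine ⟨T.mkContinuous K.toReal hTbound, ?_⟩
  intro v
  have hcoe : ((T.mkContinuous K.toReal hTbound) v : ℝ → EuclideanSpace ℝ (Fin p))
      =ᵐ[μab a b] H v := by
    have : (T.mkContinuous K.toReal hTbound) v = (hmem v).toLp (H v) := rfl
    rw [this]
    exact MemLp.coeFn_toLp (hmem v)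
  have hG1' : ∀ᵐ θ ∂volume, θ ∈ Set.Icc a b → G1' θ = G1 θ :=
    (ae_restrict_iff' hIcc).1 hG1ae
  have hG2' : ∀ᵐ θ ∂volume, θ ∈ Set.Icc a b → G2' θ = G2 θ :=
    (ae_restrict_iff' hIcc).1 hG2ae
  filter_upwards [hcoe, ae_restrict_mem hIcc, hR0ae, hF1ae, hF2ae]
    with s hs hsmem h0 h1 h2
  intro i
  rw [hs]
  have hsa : a ≤ s := hsmem.1
  have hsb : s ≤ b := hsmem.2
  have hsub1 : Set.uIoc a s ⊆ Set.Icc a b := by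
    rw [Set.uIoc_of_le hsa]
    exact fun θ hθ => ⟨hθ.1.le, hθ.2.trans hsb⟩
  have hsub2 : Set.uIoc s b ⊆ Set.Icc a b := by
    rw [Set.uIoc_of_le hsb]
    exact fun θ hθ => ⟨hsa.trans hθ.1.le, hθ.2⟩
  have ht1 : ∫ θ in a..s, (R1 s θ).mulVec
        (fun j => (v : ℝ → EuclideanSpace ℝ (Fin q)) θ j) i
      = ∑ k, F1' s k i * ∫ θ in a..s, (G1' θ).mulVec (U v θ) k := by
    have congr1 : ∫ θ in a..s, (R1 s θ).mulVec
          (fun j => (v : ℝ → EuclideanSpace ℝ (Fin q)) θ j) i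
        = ∫ θ in a..s, ∑ k, F1' s k i * (G1' θ).mulVec (U v θ) k := by
      refine intervalIntegral.integral_congr_ae ?_
      filter_upwards [hG1'] with θ hθ hmemθ
      have hθIcc : θ ∈ Set.Icc a b := hsub1 hmemθ
      rw [hR1eq s hsmem θ hθIcc, ThreePIAux.mulVec_transpose_mul]
      refine Finset.sum_congr rfl fun k _ => ?_
      rw [h1, hθ hθIcc, hUmem v θ hθIcc]
    rw [congr1, intervalIntegral.integral_finset_sum]
    · exact Finset.sum_congr rfl fun k _ => intervalIntegral.integral_const_mul _ _
    · exact fun k _ => ((hg1int v k).intervalIntegrable).const_mul _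
  have ht2 : ∫ θ in s..b, (R2 s θ).mulVec
        (fun j => (v : ℝ → EuclideanSpace ℝ (Fin q)) θ j) i
      = ∑ k, F2' s k i * ∫ θ in s..b, (G2' θ).mulVec (U v θ) k := by
    have congr2 : ∫ θ in s..b, (R2 s θ).mulVec
          (fun j => (v : ℝ → EuclideanSpace ℝ (Fin q)) θ j) i
        = ∫ θ in s..b, ∑ k, F2' s k i * (G2' θ).mulVec (U v θ) k := by
      refine intervalIntegral.integral_congr_ae ?_
      filter_upwards [hG2'] with θ hθ hmemθ
      have hθIcc : θ ∈ Set.Icc a b := hsub2 hmemθ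
      rw [hR2eq s hsmem θ hθIcc, ThreePIAux.mulVec_transpose_mul]
      refine Finset.sum_congr rfl fun k _ => ?_
      rw [h2, hθ hθIcc, hUmem v θ hθIcc]
    rw [congr2, intervalIntegral.integral_finset_sum]
    · exact Finset.sum_congr rfl fun k _ => intervalIntegral.integral_const_mul _ _
    · exact fun k _ => ((hg2int v k).intervalIntegrable).const_mul _
  rw [ht1, ht2]
  show ThreePIAux.Hfun a b R0' F1' G1' F2' G2' (U v) s i = _
  simp only [ThreePIAux.Hfun, WithLp.ofLp_toLp]
  rw [h0, hUmem v s hsmem]
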